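/- Assume P is μ-strongly convex with μ > 0. Fix x ∈ ℝ^d and reals h_{ij} with |h_{ij}| ≤ γ (i ∈ [n], j ∈ [m]); write h_i = (h_{i1},…,h_{im}) ∈ ℝ^m. Set β = max_{i,j} (h_{ij}(x) + 2γ)/(h_{ij} + 2γ), H = (1/(nm)) Σ_{i,j} [ β (h_{ij} + 2γ) − 2γ ] a_{ij} a_{ij}ᵀ, and x⁺ = x − (H + λ I)^{-1} ∇P(x). Then ‖x⁺ − x*‖² ≤ (72 R⁴/μ²) ‖x − x*‖² Σ_{i=1}^n ‖h_i − h_i(x*)‖² + (72 ν² R⁶/μ²) ‖x − x*‖⁴. -/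

import Mathlib

open MeasureTheory Filter
open scoped BigOperators

noncomputable section

abbrev Euc (d : ℕ) := EuclideanSpace ℝ (Fin d)

/-- Real inner product on Euclidean space. -/
def rinner {d : ℕ} (a x : Euc d) : ℝ := inner ℝ a x

/-- The rank-one matrix `a aᵀ`. -/
def outerMat {d : ℕ} (a : Euc d) : Matrix (Fin d) (Fin d) ℝ := fun p q => a p * a q

/-- `(1/(nm)) ∑_{ij} c_{ij} a_{ij} a_{ij}ᵀ`. -/
def Hmat {n m d : ℕ} (a : Fin n → Fin m → Euc d) (c : Fin n → Fin m → ℝ) :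
    Matrix (Fin d) (Fin d) ℝ :=
  ((n : ℝ) * m)⁻¹ • ∑ i, ∑ j, c i j • outerMat (a i j)

/-- Matrix-vector multiplication as a map on Euclidean space. -/
def mulVecE {d : ℕ} (M : Matrix (Fin d) (Fin d) ℝ) (v : Euc d) : Euc d := WithLp.toLp 2 (M.mulVec v)

/-- The vector `h_i(y) = (φ''_{i1}(⟨a_{i1},y⟩), …, φ''_{im}(⟨a_{im},y⟩)) ∈ ℝ^m`. -/
def hvecOf {n m d : ℕ} (a : Fin n → Fin m → Euc d) (φ'' : Fin n → Fin m → ℝ → ℝ)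
    (i : Fin n) (y : Euc d) : Euc m :=
  WithLp.toLp 2 (fun j => φ'' i j (rinner (a i j) y))

/-- Componentwise positive part on ℝ^m. -/
def posPartE {m : ℕ} (v : Euc m) : Euc m := WithLp.toLp 2 (fun j => max (v j) 0)

/-! ### Auxiliary lemmas -/

lemma le_of_small_pert (A B C : ℝ) (hC : 0 ≤ C) (h : ∀ t : ℝ, 0 < t → A ≤ B + t * C) : A ≤ B := by
  by_contra hc
  push_neg at hc
  have ht : (0:ℝ) < (A - B) / (2 * (C + 1)) := div_pos (by linarith) (by positivity)
  have h2 := h _ ht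
  have h3 : (A - B) / (2 * (C + 1)) * C ≤ (A - B) / 2 := by
    rw [div_mul_eq_mul_div, div_le_div_iff₀ (by positivity) (by norm_num)]
    nlinarith
  linarith

lemma mvt_theta (f : ℝ → ℝ) (hf : ContDiff ℝ 2 f) (ν : ℝ) (hν : 0 ≤ ν)
    (hlip : ∀ s t : ℝ, |deriv (deriv f) s - deriv (deriv f) t| ≤ ν * |s - t|)
    (s t : ℝ) :
    ∃ θ : ℝ, deriv f t - deriv f s = θ * (t - s) ∧ |θ - deriv (deriv f) s| ≤ ν * |t - s| := by
  have hdf : Differentiable ℝ (deriv f) := by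
    have h2 : (1 + 1 : WithTop ℕ∞) = 2 := by norm_num
    rw [← h2] at hf
    have := (contDiff_succ_iff_deriv.mp hf).2.2
    exact this.differentiable (by norm_num)
  have hcont : Continuous (deriv f) := hdf.continuous
  have key : ∀ p q : ℝ, p < q → ∃ θ : ℝ,
      deriv f q - deriv f p = θ * (q - p) ∧ ∃ ξ ∈ Set.Ioo p q, θ = deriv (deriv f) ξ := by
    intro p q hpq
    obtain ⟨ξ, hξ, hval⟩ := exists_hasDerivAt_eq_slope (deriv f) (deriv (deriv f)) hpq
      hcont.continuousOn (fun z _ => (hdf z).hasDerivAt)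
    refine ⟨deriv (deriv f) ξ, ?_, ξ, hξ, rfl⟩
    rw [eq_div_iff (by intro h0; rw [sub_eq_zero] at h0; exact absurd h0.symm (ne_of_lt hpq))] at hval
    linarith
  rcases lt_trichotomy s t with h | h | h
  · obtain ⟨θ, hθ, ξ, hξ, rfl⟩ := key s t h
    refine ⟨_, hθ, ?_⟩
    calc |deriv (deriv f) ξ - deriv (deriv f) s| ≤ ν * |ξ - s| := hlip ξ s
      _ ≤ ν * |t - s| := by
        apply mul_le_mul_of_nonneg_left _ hν
        rw [abs_of_pos (by linarith [hξ.1] : (0:ℝ) < ξ - s),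
          abs_of_pos (by linarith : (0:ℝ) < t - s)]
        linarith [hξ.2]
  · exact ⟨deriv (deriv f) s, by rw [h]; ring, by simp [h]⟩
  · obtain ⟨θ, hθ, ξ, hξ, rfl⟩ := key t s h
    refine ⟨_, by linarith [hθ], ?_⟩
    calc |deriv (deriv f) ξ - deriv (deriv f) s| ≤ ν * |ξ - s| := hlip ξ s
      _ ≤ ν * |t - s| := by
        apply mul_le_mul_of_nonneg_left _ hν
        rw [abs_of_neg (by linarith [hξ.2] : ξ - s < 0),
          abs_of_neg (by linarith : t - s < 0)]
        linarith [hξ.1]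

lemma rinner_apply {d : ℕ} (a v : Euc d) : rinner a v = ∑ p, a p * v p := by
  simp [rinner, PiLp.inner_apply, RCLike.inner_apply, conj_trivial]
  exact Finset.sum_congr rfl fun _ _ => mul_comm _ _

lemma hasGradientAt_P {n m d : ℕ} (lam : ℝ) (a : Fin n → Fin m → Euc d)
    (φ : Fin n → Fin m → ℝ → ℝ) (hsmooth : ∀ i j, ContDiff ℝ 2 (φ i j))
    (y : Euc d) :
    HasGradientAt (fun y : Euc d =>
        ((n : ℝ) * m)⁻¹ * (∑ i, ∑ j, φ i j (rinner (a i j) y)) + lam / 2 * ‖y‖ ^ 2)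
      ((((n : ℝ) * m)⁻¹ • ∑ i, ∑ j, deriv (φ i j) (rinner (a i j) y) • a i j) + lam • y) y := by
  have h1 : ∀ i (j : Fin m), HasFDerivAt (fun z : Euc d => φ i j (rinner (a i j) z))
      (deriv (φ i j) (rinner (a i j) y) • (innerSL ℝ (a i j))) y := by
    intro i j
    have hd : HasDerivAt (φ i j) (deriv (φ i j) (rinner (a i j) y)) (rinner (a i j) y) :=
      (((hsmooth i j).differentiable (by norm_num)) _).hasDerivAt
    have hi : HasFDerivAt (fun z : Euc d => rinner (a i j) z) (innerSL ℝ (a i j)) y :=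
      (innerSL ℝ (a i j)).hasFDerivAt
    exact hd.comp_hasFDerivAt y hi
  have h2 : HasFDerivAt (fun z : Euc d =>
      ((n : ℝ) * m)⁻¹ * (∑ i, ∑ j, φ i j (rinner (a i j) z)))
      (((n : ℝ) * m)⁻¹ • ∑ i : Fin n, ∑ j : Fin m,
        deriv (φ i j) (rinner (a i j) y) • (innerSL ℝ (a i j))) y := by
    refine HasFDerivAt.const_mul ?_ _
    refine HasFDerivAt.fun_sum fun i _ => HasFDerivAt.fun_sum fun j _ => h1 i j
  have h3 : HasFDerivAt (fun z : Euc d => lam / 2 * ‖z‖ ^ 2)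
      ((lam / 2) • ((fderivInnerCLM ℝ ((y : Euc d), y)).comp
        ((ContinuousLinearMap.id ℝ (Euc d)).prod (ContinuousLinearMap.id ℝ (Euc d))))) y := by
    have : HasFDerivAt (fun z : Euc d => (inner ℝ z z : ℝ))
        ((fderivInnerCLM ℝ ((y : Euc d), y)).comp
          ((ContinuousLinearMap.id ℝ (Euc d)).prod (ContinuousLinearMap.id ℝ (Euc d)))) y :=
      (hasFDerivAt_id y).inner (𝕜 := ℝ) (hasFDerivAt_id y)
    have := this.const_mul (lam / 2)
    simp only [real_inner_self_eq_norm_sq] at this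
    exact this
  have hsum := h2.add h3
  rw [hasGradientAt_iff_hasFDerivAt]
  refine hsum.congr_fderiv ?_
  ext v
  simp only [InnerProductSpace.toDual_apply_apply, ContinuousLinearMap.add_apply,
    ContinuousLinearMap.smul_apply, ContinuousLinearMap.coe_smul', Pi.smul_apply,
    ContinuousLinearMap.coe_comp', Function.comp_apply, ContinuousLinearMap.prod_apply,
    ContinuousLinearMap.coe_id', id_eq, fderivInnerCLM_apply, ContinuousLinearMap.coe_sum',
    Finset.sum_apply, innerSL_apply_apply, inner_add_left, inner_smul_left, inner_sum,
    RCLike.star_def, conj_trivial]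
  rw [sum_inner]
  simp only [sum_inner, inner_smul_left, conj_trivial, smul_eq_mul]
  rw [real_inner_comm v y]
  ring

lemma mulVecE_formula {n m d : ℕ} (lam : ℝ) (a : Fin n → Fin m → Euc d)
    (c' : Fin n → Fin m → ℝ) (v : Euc d) :
    mulVecE (Hmat a c' + lam • (1 : Matrix (Fin d) (Fin d) ℝ)) v
      = ((((n:ℝ)*m)⁻¹ • ∑ i, ∑ j, (c' i j * rinner (a i j) v) • a i j) + lam • v : Euc d) := by
  ext p
  have hL : mulVecE (Hmat a c' + lam • (1 : Matrix (Fin d) (Fin d) ℝ)) v p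
      = ∑ q, (((n:ℝ)*m)⁻¹ * (∑ i, ∑ j, c' i j * (a i j p * a i j q))
          + lam * (if p = q then 1 else 0)) * v q := by
    simp only [mulVecE, Matrix.mulVec, dotProduct, Matrix.add_apply, Matrix.smul_apply,
      Matrix.one_apply, Hmat, Matrix.sum_apply, outerMat, smul_eq_mul, mul_ite, mul_one, mul_zero]
  have hR : ((((n:ℝ)*m)⁻¹ • ∑ i, ∑ j, (c' i j * rinner (a i j) v) • a i j) + lam • v : Euc d) p
      = ((n:ℝ)*m)⁻¹ * (∑ i, ∑ j, (c' i j * (∑ q, a i j q * v q)) * a i j p) + lam * v p := by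
    simp only [PiLp.add_apply, PiLp.smul_apply, smul_eq_mul, rinner_apply]
    congr 1
    rw [WithLp.ofLp_sum, Finset.sum_apply]
    congr 1
    refine Finset.sum_congr rfl fun i _ => ?_
    rw [WithLp.ofLp_sum, Finset.sum_apply]
    refine Finset.sum_congr rfl fun j _ => ?_
    simp
  rw [hL, hR]
  simp only [add_mul, Finset.sum_add_distrib, mul_ite, mul_one, mul_zero, ite_mul, zero_mul]
  congr 1
  · simp only [mul_assoc, ← Finset.mul_sum]
    congr 1
    simp only [Finset.sum_mul]
    rw [Finset.sum_comm]
    refine Finset.sum_congr rfl fun i _ => ?_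
    rw [Finset.sum_comm]
    refine Finset.sum_congr rfl fun j _ => ?_
    rw [Finset.mul_sum]
    refine Finset.sum_congr rfl fun q _ => ?_
    ring
  · simp [Finset.sum_ite_eq]

lemma rinner_comb {n m d : ℕ} (lam : ℝ) (a : Fin n → Fin m → Euc d)
    (r : Fin n → Fin m → ℝ) (z v : Euc d) :
    rinner (((((n:ℝ)*m)⁻¹ • ∑ i, ∑ j, r i j • a i j) + lam • z : Euc d)) v
      = ((n:ℝ)*m)⁻¹ * (∑ i, ∑ j, r i j * rinner (a i j) v) + lam * rinner z v := by
  simp [rinner, inner_add_left, inner_smul_left, sum_inner, conj_trivial]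

lemma norm_comb_le {n m d : ℕ} (hn : 0 < n) (hm : 0 < m) (a : Fin n → Fin m → Euc d)
    (r : Fin n → Fin m → ℝ) (K : ℝ) (hK : ∀ i j, ‖r i j • a i j‖ ≤ K) :
    ‖((((n:ℝ)*m)⁻¹ • ∑ i, ∑ j, r i j • a i j) : Euc d)‖ ≤ K := by
  have hnm : (0:ℝ) < (n:ℝ) * m := by positivity
  rw [norm_smul]
  have h1 : ‖(∑ i, ∑ j, r i j • a i j : Euc d)‖ ≤ (n:ℝ) * m * K := by
    calc ‖(∑ i, ∑ j, r i j • a i j : Euc d)‖ ≤ ∑ i, ‖(∑ j, r i j • a i j : Euc d)‖ :=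
          norm_sum_le _ _
      _ ≤ ∑ i : Fin n, ∑ j : Fin m, ‖r i j • a i j‖ :=
          Finset.sum_le_sum fun i _ => norm_sum_le _ _
      _ ≤ ∑ i : Fin n, ∑ j : Fin m, K :=
          Finset.sum_le_sum fun i _ => Finset.sum_le_sum fun j _ => hK i j
      _ = (n:ℝ) * m * K := by simp [Finset.sum_const]; ring
  calc ‖((n:ℝ)*m)⁻¹‖ * ‖(∑ i, ∑ j, r i j • a i j : Euc d)‖
      ≤ ‖((n:ℝ)*m)⁻¹‖ * ((n:ℝ) * m * K) := by
        apply mul_le_mul_of_nonneg_left h1 (norm_nonneg _)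
    _ = K := by
        rw [Real.norm_eq_abs, abs_of_pos (by positivity)]
        field_simp

lemma mulVecE_add {d : ℕ} (M : Matrix (Fin d) (Fin d) ℝ) (v w : Euc d) :
    mulVecE M (v + w) = mulVecE M v + mulVecE M w := by
  ext p
  exact congrFun (Matrix.mulVec_add M v w) p

lemma mulVecE_neg {d : ℕ} (M : Matrix (Fin d) (Fin d) ℝ) (v : Euc d) :
    mulVecE M (-v) = -(mulVecE M v) := by
  ext p
  exact congrFun (Matrix.mulVec_neg v M) p

lemma mulVecE_comp {d : ℕ} (M N : Matrix (Fin d) (Fin d) ℝ) (v : Euc d) :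
    mulVecE M (mulVecE N v) = mulVecE (M * N) v := by
  ext p
  exact congrFun (Matrix.mulVec_mulVec v M N) p

lemma mulVecE_one {d : ℕ} (v : Euc d) : mulVecE 1 v = v := by
  ext p
  exact congrFun (Matrix.one_mulVec v) p

set_option maxHeartbeats 1600000 in
/-- one NL2-type Newton step under μ-strong convexity. -/
theorem nl2_iterate_bound
    {n m d : ℕ} (hn : 0 < n) (hm : 0 < m) (hd : 0 < d)
    (ν γ lam R μ : ℝ) (hν : 0 ≤ ν) (hγ : 0 < γ) (hlam : 0 ≤ lam) (hμ : 0 < μ)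
    (a : Fin n → Fin m → Euc d) (φ : Fin n → Fin m → ℝ → ℝ)
    (φ'' : Fin n → Fin m → ℝ → ℝ) (hφ'' : ∀ i j, φ'' i j = deriv (deriv (φ i j)))
    (hsmooth : ∀ i j, ContDiff ℝ 2 (φ i j))
    (hbdd : ∀ i j t, |φ'' i j t| ≤ γ)
    (hlip : ∀ i j s t, |φ'' i j s - φ'' i j t| ≤ ν * |s - t|)
    (hRub : ∀ i j, ‖a i j‖ ≤ R) (hRmem : ∃ i j, R = ‖a i j‖)
    (P : Euc d → ℝ)
    (hP : ∀ y, P y = ((n : ℝ) * m)⁻¹ * (∑ i, ∑ j, φ i j (rinner (a i j) y))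
        + lam / 2 * ‖y‖ ^ 2)
    (hsc : ∀ y z : Euc d,
        P y + rinner (gradient P y) (z - y) + μ / 2 * ‖z - y‖ ^ 2 ≤ P z)
    (xstar : Euc d) (hmin : ∀ y, P xstar ≤ P y)
    (x : Euc d) (c : Fin n → Fin m → ℝ) (hcγ : ∀ i j, |c i j| ≤ γ)
    (β : ℝ)
    (hβub : ∀ i j, (φ'' i j (rinner (a i j) x) + 2 * γ) / (c i j + 2 * γ) ≤ β)
    (hβmem : ∃ i j, β = (φ'' i j (rinner (a i j) x) + 2 * γ) / (c i j + 2 * γ))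
    (xplus : Euc d)
    (hstep : xplus = x - mulVecE
        (Hmat a (fun i j => β * (c i j + 2 * γ) - 2 * γ) +
          lam • (1 : Matrix (Fin d) (Fin d) ℝ))⁻¹ (gradient P x)) :
    ‖xplus - xstar‖ ^ 2 ≤
      72 * R ^ 4 / μ ^ 2 * ‖x - xstar‖ ^ 2 *
        (∑ i, ∑ j, (c i j - φ'' i j (rinner (a i j) xstar)) ^ 2) +
      72 * ν ^ 2 * R ^ 6 / μ ^ 2 * ‖x - xstar‖ ^ 4 := by
  obtain ⟨k, l, hβkl⟩ := hβmem
  have hR0 : 0 ≤ R := by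
    obtain ⟨i0, j0, h0⟩ := hRmem
    rw [h0]; exact norm_nonneg _
  have hn' : (0:ℝ) < n := by exact_mod_cast hn
  have hm' : (0:ℝ) < m := by exact_mod_cast hm
  have hnm : (0:ℝ) < (n:ℝ) * m := mul_pos hn' hm'
  have hnminv : (0:ℝ) ≤ ((n:ℝ)*m)⁻¹ := le_of_lt (inv_pos.mpr hnm)
  set Gv : Euc d → Euc d := fun y =>
    (((n:ℝ)*m)⁻¹ • ∑ i, ∑ j, deriv (φ i j) (rinner (a i j) y) • a i j) + lam • y with hGvdef
  have hgrad : ∀ y, gradient P y = Gv y := by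
    intro y
    rw [funext hP]
    exact (hasGradientAt_P lam a φ hsmooth y).gradient
  -- gradient vanishes at the minimizer
  have hgs : Gv xstar = 0 := by
    have hloc : IsLocalMin P xstar := Filter.Eventually.of_forall hmin
    have hfd : HasFDerivAt P ((InnerProductSpace.toDual ℝ (Euc d)) (Gv xstar)) xstar := by
      rw [funext hP]
      exact hasGradientAt_iff_hasFDerivAt.mp (hasGradientAt_P lam a φ hsmooth xstar)
    have h0 := hloc.hasFDerivAt_eq_zero hfd
    have h1 := congrArg (fun L => (InnerProductSpace.toDual ℝ (Euc d)).symm L) h0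
    simpa using h1
  -- monotonicity of the gradient
  have hmono : ∀ y z : Euc d, μ * ‖y - z‖^2 ≤ rinner (Gv y - Gv z) (y - z) := by
    intro y z
    have h1 := hsc y z
    have h2 := hsc z y
    rw [hgrad] at h1 h2
    have e1 : rinner (Gv y) (z - y) = - rinner (Gv y) (y - z) := by
      rw [show z - y = -(y - z) from (neg_sub y z).symm]
      simp only [rinner, inner_neg_right]
    have e2 : rinner (Gv y - Gv z) (y - z)
        = rinner (Gv y) (y - z) - rinner (Gv z) (y - z) := by
      simp only [rinner, inner_sub_left]
    have e3 : ‖z - y‖ = ‖y - z‖ := norm_sub_rev _ _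
    rw [e1, e3] at h1
    rw [e2]
    nlinarith [h1, h2]
  -- difference of gradients
  have hGdiff : ∀ y z : Euc d, Gv y - Gv z =
      (((n:ℝ)*m)⁻¹ • ∑ i, ∑ j,
        (deriv (φ i j) (rinner (a i j) y) - deriv (φ i j) (rinner (a i j) z)) • a i j)
        + lam • (y - z) := by
    intro y z
    simp only [hGvdef, sub_smul, Finset.sum_sub_distrib, smul_sub]
    abel
  -- Hessian lower bound at x
  have hhess : ∀ v : Euc d, μ * ‖v‖^2 ≤
      ((n:ℝ)*m)⁻¹ * (∑ i, ∑ j, φ'' i j (rinner (a i j) x) * (rinner (a i j) v)^2)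
        + lam * ‖v‖^2 := by
    intro v
    have hC0 : 0 ≤ ν * (((n:ℝ)*m)⁻¹ * ∑ i, ∑ j, |rinner (a i j) v| * (rinner (a i j) v)^2) := by
      apply mul_nonneg hν
      apply mul_nonneg hnminv
      apply Finset.sum_nonneg; intro i _
      apply Finset.sum_nonneg; intro j _
      positivity
    apply le_of_small_pert _ _ _ hC0
    intro t ht
    have hm1 := hmono (x + t • v) x
    rw [hGdiff] at hm1
    have e0 : (x + t • v) - x = t • v := by abel
    rw [e0, rinner_comb] at hm1
    have eA : ∀ (i : Fin n) (j : Fin m),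
        rinner (a i j) (x + t • v) = rinner (a i j) x + t * rinner (a i j) v := by
      intro i j; simp only [rinner, inner_add_right, real_inner_smul_right]
    have eB : ∀ (i : Fin n) (j : Fin m), rinner (a i j) (t • v) = t * rinner (a i j) v := by
      intro i j; simp only [rinner, real_inner_smul_right]
    have eC : rinner (t • v : Euc d) (t • v) = t^2 * ‖v‖^2 := by
      simp only [rinner, real_inner_smul_right, real_inner_smul_left]
      rw [real_inner_self_eq_norm_sq]
      ring
    have eD : ‖t • v‖^2 = t^2 * ‖v‖^2 := by
      rw [norm_smul]
      simp [Real.norm_eq_abs, mul_pow, sq_abs]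
    have hterm : ∀ (i : Fin n) (j : Fin m),
        (deriv (φ i j) (rinner (a i j) (x + t • v)) - deriv (φ i j) (rinner (a i j) x))
          * rinner (a i j) (t • v)
        ≤ t^2 * (φ'' i j (rinner (a i j) x) * (rinner (a i j) v)^2
            + ν * t * (|rinner (a i j) v| * (rinner (a i j) v)^2)) := by
      intro i j
      obtain ⟨ψ, hp1, hp2⟩ := mvt_theta (φ i j) (hsmooth i j) ν hν
        (fun s t => by rw [← hφ'' i j]; exact hlip i j s t)
        (rinner (a i j) x) (rinner (a i j) (x + t • v))
      rw [← hφ'' i j] at hp2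
      rw [eA i j] at hp1 hp2
      rw [eA i j, eB i j, hp1]
      have e6 : |rinner (a i j) x + t * rinner (a i j) v - rinner (a i j) x|
          = t * |rinner (a i j) v| := by
        rw [show rinner (a i j) x + t * rinner (a i j) v - rinner (a i j) x
            = t * rinner (a i j) v from by ring, abs_mul, abs_of_pos ht]
      rw [e6] at hp2
      have h5 : ψ ≤ φ'' i j (rinner (a i j) x) + ν * (t * |rinner (a i j) v|) := by
        have := (abs_le.mp hp2).2
        linarith
      have h7 : (0:ℝ) ≤ t^2 * (rinner (a i j) v)^2 := by positivity
      calc ψ * ((rinner (a i j) x + t * rinner (a i j) v) - rinner (a i j) x)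
            * (t * rinner (a i j) v)
          = t^2 * (rinner (a i j) v)^2 * ψ := by ring
        _ ≤ t^2 * (rinner (a i j) v)^2
              * (φ'' i j (rinner (a i j) x) + ν * (t * |rinner (a i j) v|)) :=
            mul_le_mul_of_nonneg_left h5 h7
        _ = t^2 * (φ'' i j (rinner (a i j) x) * (rinner (a i j) v)^2
              + ν * t * (|rinner (a i j) v| * (rinner (a i j) v)^2)) := by ring
    have hsum : ∑ i, ∑ j,
        (deriv (φ i j) (rinner (a i j) (x + t • v)) - deriv (φ i j) (rinner (a i j) x))
          * rinner (a i j) (t • v)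
        ≤ ∑ i, ∑ j, t^2 * (φ'' i j (rinner (a i j) x) * (rinner (a i j) v)^2
            + ν * t * (|rinner (a i j) v| * (rinner (a i j) v)^2)) :=
      Finset.sum_le_sum fun i _ => Finset.sum_le_sum fun j _ => hterm i j
    have e8 : ∑ i : Fin n, ∑ j : Fin m, t^2 * (φ'' i j (rinner (a i j) x) * (rinner (a i j) v)^2
            + ν * t * (|rinner (a i j) v| * (rinner (a i j) v)^2))
        = t^2 * (∑ i, ∑ j, φ'' i j (rinner (a i j) x) * (rinner (a i j) v)^2)
          + t^2 * ν * t * (∑ i, ∑ j, |rinner (a i j) v| * (rinner (a i j) v)^2) := by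
      rw [Finset.mul_sum, Finset.mul_sum, ← Finset.sum_add_distrib]
      refine Finset.sum_congr rfl fun i _ => ?_
      rw [Finset.mul_sum, Finset.mul_sum, ← Finset.sum_add_distrib]
      refine Finset.sum_congr rfl fun j _ => ?_
      ring
    rw [eC, eD] at hm1
    have hm2 : μ * (t^2 * ‖v‖^2)
        ≤ ((n:ℝ)*m)⁻¹ * (t^2 * (∑ i, ∑ j, φ'' i j (rinner (a i j) x) * (rinner (a i j) v)^2)
            + t^2 * ν * t * (∑ i, ∑ j, |rinner (a i j) v| * (rinner (a i j) v)^2))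
          + lam * (t^2 * ‖v‖^2) := by
      refine le_trans hm1 (add_le_add_left ?_ _)
      rw [← e8]
      exact mul_le_mul_of_nonneg_left hsum hnminv
    have ht2 : (0:ℝ) < t^2 := by positivity
    rw [← mul_le_mul_iff_right₀ ht2]
    ring_nf
    ring_nf at hm2
    linarith [hm2]
  -- the matrix and its quadratic form
  set coef : Fin n → Fin m → ℝ := fun i j => β * (c i j + 2 * γ) - 2 * γ with hcoefdef
  set M : Matrix (Fin d) (Fin d) ℝ := Hmat a coef + lam • (1 : Matrix (Fin d) (Fin d) ℝ)
    with hMdef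
  have hden : ∀ i j, γ ≤ c i j + 2*γ := by
    intro i j
    have := (abs_le.mp (hcγ i j)).1
    linarith
  have hcoefge : ∀ i j, φ'' i j (rinner (a i j) x) ≤ coef i j := by
    intro i j
    have h1 := hβub i j
    have h2 : 0 < c i j + 2*γ := lt_of_lt_of_le hγ (hden i j)
    rw [div_le_iff₀ h2] at h1
    simp only [hcoefdef]
    linarith
  have hquad : ∀ v : Euc d, μ * ‖v‖^2 ≤ rinner (mulVecE M v) v := by
    intro v
    rw [hMdef, mulVecE_formula, rinner_comb]
    have e9 : rinner v v = ‖v‖^2 := real_inner_self_eq_norm_sq v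
    rw [e9]
    refine le_trans (hhess v) (add_le_add_left ?_ _)
    refine mul_le_mul_of_nonneg_left ?_ hnminv
    refine Finset.sum_le_sum fun i _ => Finset.sum_le_sum fun j _ => ?_
    have h1 := mul_le_mul_of_nonneg_right (hcoefge i j) (sq_nonneg (rinner (a i j) v))
    nlinarith [h1]
  -- invertibility of M
  have hdetM : IsUnit M.det := by
    rw [isUnit_iff_ne_zero]
    intro h0
    obtain ⟨v, hvne, hv0⟩ := Matrix.exists_mulVec_eq_zero_iff.mpr h0
    have hq := hquad (WithLp.toLp 2 v)
    have hz : mulVecE M (WithLp.toLp 2 v) = 0 := by rw [mulVecE, hv0]; rfl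
    rw [hz] at hq
    have hri : rinner (0 : Euc d) (WithLp.toLp 2 v) = 0 := by simp only [rinner, inner_zero_left]
    rw [hri] at hq
    rw [show (0:ℝ) = μ * 0 from (mul_zero μ).symm] at hq
    have h7 := le_of_mul_le_mul_left hq hμ
    have h9 := le_antisymm h7 (sq_nonneg _)
    have h10 := (pow_eq_zero_iff (by norm_num : (2:ℕ) ≠ 0)).mp h9
    rw [norm_eq_zero] at h10
    exact hvne (congrArg WithLp.ofLp h10)
  have hMinv : M * M⁻¹ = 1 := Matrix.mul_nonsing_inv M hdetM
  -- the Newton step identity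
  have hstep2 : mulVecE M (xplus - x) = -(Gv x) := by
    rw [hstep, hgrad]
    rw [show x - mulVecE M⁻¹ (Gv x) - x = -(mulVecE M⁻¹ (Gv x)) from by abel]
    rw [mulVecE_neg, mulVecE_comp, hMinv, mulVecE_one]
  -- per-pair slopes between xstar and x
  set dst : Fin n → Fin m → ℝ := fun i j => rinner (a i j) (x - xstar) with hdstdef
  have hsub : ∀ i j, rinner (a i j) x - rinner (a i j) xstar = dst i j := by
    intro i j
    simp only [hdstdef, rinner, inner_sub_right]
  have hdstR : ∀ i j, |dst i j| ≤ R * ‖x - xstar‖ := by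
    intro i j
    have h1 : |dst i j| ≤ ‖a i j‖ * ‖x - xstar‖ := by
      simpa only [hdstdef, rinner] using abs_real_inner_le_norm (a i j) (x - xstar)
    exact le_trans h1 (mul_le_mul_of_nonneg_right (hRub i j) (norm_nonneg _))
  have hθex : ∀ i j, ∃ θ : ℝ,
      deriv (φ i j) (rinner (a i j) x) - deriv (φ i j) (rinner (a i j) xstar) = θ * dst i j
      ∧ |θ - φ'' i j (rinner (a i j) xstar)| ≤ ν * |dst i j| := by
    intro i j
    obtain ⟨θ, h1, h2⟩ := mvt_theta (φ i j) (hsmooth i j) ν hν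
      (fun s t => by rw [← hφ'' i j]; exact hlip i j s t)
      (rinner (a i j) xstar) (rinner (a i j) x)
    rw [← hφ'' i j] at h2
    rw [hsub i j] at h1 h2
    exact ⟨θ, h1, h2⟩
  choose θ hθ1 hθ2 using hθex
  set w : Euc d := ((n:ℝ)*m)⁻¹ • ∑ i, ∑ j, ((coef i j - θ i j) * dst i j) • a i j with hwdef
  -- the key identity
  have hid : mulVecE M (xplus - xstar) = w := by
    have e11 : xplus - xstar = (xplus - x) + (x - xstar) := by abel
    rw [e11, mulVecE_add, hstep2, hMdef, mulVecE_formula]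
    have e12 : Gv x = Gv x - Gv xstar := by rw [hgs, sub_zero]
    rw [e12, hGdiff]
    simp only [hθ1]
    rw [hwdef]
    simp only [hdstdef, sub_mul, sub_smul, Finset.sum_sub_distrib, smul_sub]
    abel
  -- norm bound on w
  set T := Real.sqrt (∑ i, ∑ j, (c i j - φ'' i j (rinner (a i j) xstar))^2) with hTdef
  have hS0 : (0:ℝ) ≤ ∑ i, ∑ j, (c i j - φ'' i j (rinner (a i j) xstar))^2 := by positivity
  have hT0 : 0 ≤ T := Real.sqrt_nonneg _
  have hT2 : T^2 = ∑ i, ∑ j, (c i j - φ'' i j (rinner (a i j) xstar))^2 := Real.sq_sqrt hS0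
  have hεT : ∀ i j, |c i j - φ'' i j (rinner (a i j) xstar)| ≤ T := by
    intro i j
    rw [← Real.sqrt_sq_eq_abs, hTdef]
    apply Real.sqrt_le_sqrt
    calc (c i j - φ'' i j (rinner (a i j) xstar))^2
        ≤ ∑ j', (c i j' - φ'' i j' (rinner (a i j') xstar))^2 :=
          Finset.single_le_sum
            (f := fun j' => (c i j' - φ'' i j' (rinner (a i j') xstar))^2)
            (fun j' _ => sq_nonneg _) (Finset.mem_univ j)
      _ ≤ ∑ i', ∑ j', (c i' j' - φ'' i' j' (rinner (a i' j') xstar))^2 :=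
          Finset.single_le_sum
            (f := fun i' => ∑ j', (c i' j' - φ'' i' j' (rinner (a i' j') xstar))^2)
            (fun i' _ => Finset.sum_nonneg fun _ _ => sq_nonneg _) (Finset.mem_univ i)
  have hlipD : ∀ i j, |φ'' i j (rinner (a i j) x) - φ'' i j (rinner (a i j) xstar)|
      ≤ ν * (R * ‖x - xstar‖) := by
    intro i j
    refine le_trans (hlip i j _ _) (mul_le_mul_of_nonneg_left ?_ hν)
    rw [show rinner (a i j) x - rinner (a i j) xstar = dst i j from hsub i j]
    exact hdstR i j
  have hNU0 : (0:ℝ) ≤ ν*(R*‖x - xstar‖) := mul_nonneg hν (mul_nonneg hR0 (norm_nonneg _))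
  have hcoefbound : ∀ i j, |coef i j - θ i j|
      ≤ 6*T + 4*(ν*(R*‖x - xstar‖)) := by
    intro i j
    have hd2 : 0 < c k l + 2*γ := lt_of_lt_of_le hγ (hden k l)
    have e13 : coef i j - φ'' i j (rinner (a i j) xstar) =
        ((φ'' k l (rinner (a k l) x) + 2*γ) * (c i j - φ'' i j (rinner (a i j) xstar))
          + (φ'' i j (rinner (a i j) xstar) + 2*γ) * (φ'' k l (rinner (a k l) x) - c k l))
          / (c k l + 2*γ) := by
      simp only [hcoefdef]
      rw [hβkl]
      field_simp
      ring
    have b1 : |φ'' k l (rinner (a k l) x) + 2*γ| ≤ 3*γ := by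
      have := abs_le.mp (hbdd k l (rinner (a k l) x))
      rw [abs_le]; constructor <;> linarith
    have b2 : |φ'' i j (rinner (a i j) xstar) + 2*γ| ≤ 3*γ := by
      have := abs_le.mp (hbdd i j (rinner (a i j) xstar))
      rw [abs_le]; constructor <;> linarith
    have b3 : |φ'' k l (rinner (a k l) x) - c k l|
        ≤ ν*(R*‖x - xstar‖) + |c k l - φ'' k l (rinner (a k l) xstar)| := by
      calc |φ'' k l (rinner (a k l) x) - c k l|
          ≤ |φ'' k l (rinner (a k l) x) - φ'' k l (rinner (a k l) xstar)|
            + |φ'' k l (rinner (a k l) xstar) - c k l| := abs_sub_le _ _ _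
        _ ≤ ν*(R*‖x - xstar‖) + |c k l - φ'' k l (rinner (a k l) xstar)| := by
            rw [abs_sub_comm (φ'' k l (rinner (a k l) xstar)) (c k l)]
            exact add_le_add_left (hlipD k l) _
    have hNb : |(φ'' k l (rinner (a k l) x) + 2*γ) * (c i j - φ'' i j (rinner (a i j) xstar))
          + (φ'' i j (rinner (a i j) xstar) + 2*γ) * (φ'' k l (rinner (a k l) x) - c k l)|
        ≤ 3*γ*|c i j - φ'' i j (rinner (a i j) xstar)|
          + 3*γ*(ν*(R*‖x - xstar‖) + |c k l - φ'' k l (rinner (a k l) xstar)|) := by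
      refine le_trans (abs_add_le _ _) ?_
      rw [abs_mul, abs_mul]
      have t1 := mul_le_mul_of_nonneg_right b1 (abs_nonneg
        (c i j - φ'' i j (rinner (a i j) xstar)))
      have t2 : |φ'' i j (rinner (a i j) xstar) + 2*γ| * |φ'' k l (rinner (a k l) x) - c k l|
          ≤ 3*γ*(ν*(R*‖x - xstar‖) + |c k l - φ'' k l (rinner (a k l) xstar)|) := by
        apply mul_le_mul b2 b3 (abs_nonneg _) (by positivity)
      linarith
    have h1 : |coef i j - φ'' i j (rinner (a i j) xstar)|
        ≤ 3*|c i j - φ'' i j (rinner (a i j) xstar)|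
          + 3*|c k l - φ'' k l (rinner (a k l) xstar)| + 3*(ν*(R*‖x - xstar‖)) := by
      rw [e13, abs_div, abs_of_pos hd2]
      have hBnn : (0:ℝ) ≤ 3*γ*|c i j - φ'' i j (rinner (a i j) xstar)|
          + 3*γ*(ν*(R*‖x - xstar‖) + |c k l - φ'' k l (rinner (a k l) xstar)|) := by
        have h5 : (0:ℝ) ≤ ν*(R*‖x - xstar‖) + |c k l - φ'' k l (rinner (a k l) xstar)| :=
          add_nonneg hNU0 (abs_nonneg _)
        have h6 : (0:ℝ) ≤ 3*γ := by linarith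
        nlinarith [abs_nonneg (c i j - φ'' i j (rinner (a i j) xstar))]
      calc _ ≤ (3*γ*|c i j - φ'' i j (rinner (a i j) xstar)|
            + 3*γ*(ν*(R*‖x - xstar‖) + |c k l - φ'' k l (rinner (a k l) xstar)|)) / γ :=
            div_le_div₀ hBnn hNb hγ (hden k l)
        _ = 3*|c i j - φ'' i j (rinner (a i j) xstar)|
            + 3*|c k l - φ'' k l (rinner (a k l) xstar)| + 3*(ν*(R*‖x - xstar‖)) := by
            field_simp
            ring
    have h2 : |φ'' i j (rinner (a i j) xstar) - θ i j| ≤ ν*(R*‖x - xstar‖) := by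
      rw [abs_sub_comm]
      exact le_trans (hθ2 i j) (mul_le_mul_of_nonneg_left (hdstR i j) hν)
    calc |coef i j - θ i j|
        ≤ |coef i j - φ'' i j (rinner (a i j) xstar)|
          + |φ'' i j (rinner (a i j) xstar) - θ i j| := abs_sub_le _ _ _
      _ ≤ 6*T + 4*(ν*(R*‖x - xstar‖)) := by
          have := hεT i j
          have := hεT k l
          linarith [h1, h2]
  have hwn : ‖w‖ ≤ (6*T + 4*(ν*(R*‖x - xstar‖))) * (R*‖x - xstar‖) * R := by
    rw [hwdef]
    apply norm_comb_le hn hm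
    intro i j
    rw [norm_smul, Real.norm_eq_abs, abs_mul]
    have hnn1 : (0:ℝ) ≤ 6*T + 4*(ν*(R*‖x - xstar‖)) := by
      have : (0:ℝ) ≤ ν*(R*‖x - xstar‖) := mul_nonneg hν (mul_nonneg hR0 (norm_nonneg _))
      linarith
    have t3 : |coef i j - θ i j| * |dst i j|
        ≤ (6*T + 4*(ν*(R*‖x - xstar‖))) * (R*‖x - xstar‖) :=
      mul_le_mul (hcoefbound i j) (hdstR i j) (abs_nonneg _) hnn1
    exact mul_le_mul t3 (hRub i j) (norm_nonneg _)
      (mul_nonneg hnn1 (mul_nonneg hR0 (norm_nonneg _)))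
  -- finish
  have hquadu := hquad (xplus - xstar)
  rw [hid] at hquadu
  have hcs : rinner w (xplus - xstar) ≤ ‖w‖ * ‖xplus - xstar‖ :=
    real_inner_le_norm w (xplus - xstar)
  have hky : μ * ‖xplus - xstar‖^2
      ≤ ((6*T + 4*(ν*(R*‖x - xstar‖))) * (R*‖x - xstar‖) * R) * ‖xplus - xstar‖ :=
    le_trans hquadu (le_trans hcs (mul_le_mul_of_nonneg_right hwn (norm_nonneg _)))
  set K := (6*T + 4*(ν*(R*‖x - xstar‖))) * (R*‖x - xstar‖) * R with hKdef
  have hKK : K^2 ≤ 72*R^4*‖x - xstar‖^2*(∑ i, ∑ j, (c i j - φ'' i j (rinner (a i j) xstar))^2)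
      + 72*ν^2*R^6*‖x - xstar‖^4 := by
    have h1 : (6*T + 4*(ν*(R*‖x - xstar‖)))^2
        ≤ 72*(∑ i, ∑ j, (c i j - φ'' i j (rinner (a i j) xstar))^2)
          + 32*(ν*(R*‖x - xstar‖))^2 := by
      nlinarith [sq_nonneg (6*T - 4*(ν*(R*‖x - xstar‖))), hT2]
    have h2 : K^2 = (6*T + 4*(ν*(R*‖x - xstar‖)))^2 * (R^4*‖x - xstar‖^2) := by
      rw [hKdef]; ring
    have h3 : (0:ℝ) ≤ R^4*‖x - xstar‖^2 := by positivity
    have h4 : (0:ℝ) ≤ ν^2*R^6*‖x - xstar‖^4 := by positivity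
    calc K^2 = (6*T + 4*(ν*(R*‖x - xstar‖)))^2 * (R^4*‖x - xstar‖^2) := h2
      _ ≤ (72*(∑ i, ∑ j, (c i j - φ'' i j (rinner (a i j) xstar))^2)
            + 32*(ν*(R*‖x - xstar‖))^2) * (R^4*‖x - xstar‖^2) :=
          mul_le_mul_of_nonneg_right h1 h3
      _ ≤ 72*R^4*‖x - xstar‖^2*(∑ i, ∑ j, (c i j - φ'' i j (rinner (a i j) xstar))^2)
          + 72*ν^2*R^6*‖x - xstar‖^4 := by nlinarith [h4]
  rcases eq_or_lt_of_le (norm_nonneg (xplus - xstar)) with h0 | h0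
  · have hL : ‖xplus - xstar‖^2 = 0 := by rw [← h0]; ring
    rw [hL]
    positivity
  · have hμu : μ * ‖xplus - xstar‖ ≤ K := by
      nlinarith [hky, h0]
    have hdivu : ‖xplus - xstar‖ ≤ K / μ := by
      rw [le_div_iff₀ hμ]
      linarith [hμu]
    have hfin : ‖xplus - xstar‖^2 ≤ (K/μ)^2 :=
      pow_le_pow_left₀ (norm_nonneg _) hdivu 2
    calc ‖xplus - xstar‖^2 ≤ (K/μ)^2 := hfin
      _ = K^2/μ^2 := by rw [div_pow]
      _ ≤ (72*R^4*‖x - xstar‖^2*(∑ i, ∑ j, (c i j - φ'' i j (rinner (a i j) xstar))^2)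
            + 72*ν^2*R^6*‖x - xstar‖^4)/μ^2 := by
          exact (div_le_div_iff_of_pos_right (pow_pos hμ 2)).mpr hKK
      _ = 72 * R ^ 4 / μ ^ 2 * ‖x - xstar‖ ^ 2 *
            (∑ i, ∑ j, (c i j - φ'' i j (rinner (a i j) xstar)) ^ 2) +
          72 * ν ^ 2 * R ^ 6 / μ ^ 2 * ‖x - xstar‖ ^ 4 := by ring
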